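/- Let E be a locally cartesian closed category with a strict initial object 0. Every morphism p : E → B factors as p = (¬¬p) ∘ p̄ where p̄ is the canonical map from E into the domain of the double negation ¬¬p. -/
import Mathlib


open CategoryTheory CategoryTheory.Limits

universe v u

/-- A locally cartesian closed category: each pullback functor `Over.pullback p`
has a right adjoint `Π_p`. -/
class LCC (C : Type u) [Category.{v} C] [HasPullbacks C] where
  Pi : ∀ {X Y : C} (p : X ⟶ Y), Over X ⥤ Over Y
  adj : ∀ {X Y : C} (p : X ⟶ Y), Over.pullback p ⊣ Pi p

variable {C : Type u} [Category.{v} C] [HasPullbacks C] [LCC C] [HasInitial C]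

/-- The negation `¬p : B∖im p ⟶ B` of `p : E ⟶ B`, i.e. `Π_p (0 ⟶ E)`,
the right edge of the distributivity pullback around `0 ⟶ E` and `p`. -/
noncomputable def neg {E B : C} (p : E ⟶ B) : Over B :=
  (LCC.Pi p).obj (Over.mk (initial.to E))

/-- The double negation `¬¬p` of `p : E ⟶ B`. -/
noncomputable def nneg {E B : C} (p : E ⟶ B) : Over B := neg (neg p).hom

/-- Every morphism `p : E ⟶ B` in a locally cartesian closed category with a strict
initial object factors through the domain of its double negation `¬¬p`. -/
theorem factorization_through_double_negation
    [HasStrictInitialObjects C] {E B : C} (p : E ⟶ B) :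
    ∃ pbar : E ⟶ (nneg p).left, pbar ≫ (nneg p).hom = p := by
  set q : (neg p).left ⟶ B := (neg p).hom with hq
  -- The counit of `pullback p ⊣ Π_p` at `0 ⟶ E` gives a map
  -- `pullback (neg p).hom p ⟶ ⊥_ C`, so that pullback is initial.
  have hcounit := (LCC.adj p).counit.app (Over.mk (initial.to E))
  have hI : IsInitial (pullback q p) :=
    IsInitial.ofStrict (hcounit.left) initialIsInitial
  have hI' : IsInitial (pullback p q) :=
    hI.ofIso (pullbackSymmetry q p)
  -- Build a morphism `(pullback q).obj (Over.mk p) ⟶ Over.mk (initial.to (neg p).left)`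
  let g : (Over.pullback q).obj (Over.mk p) ⟶ Over.mk (initial.to (neg p).left) :=
    Over.homMk (hI'.to (⊥_ C)) (hI'.hom_ext _ _)
  -- Transpose across the adjunction to get `Over.mk p ⟶ nneg p`.
  let f : Over.mk p ⟶ (LCC.Pi q).obj (Over.mk (initial.to (neg p).left)) :=
    ((LCC.adj q).homEquiv (Over.mk p) (Over.mk (initial.to (neg p).left))) g
  exact ⟨f.left, Over.w f⟩
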